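/- arXiv:2007.03311 — 3 statements merged into one kernel-verified Lean document; each statement's English description precedes it below -/
import Mathlib

section
/- Suppose each f_i : ℝ^d → ℝ is convex and L-smooth, with f = (1/n)Σ f_i. Let G = g_ν(y, i) − g_ν(z, i) + g_ν(z), where g_ν(x, i) is the coordinate-wise central-difference estimator with smoothing ν and g_ν(x) = (1/n)Σ_i g_ν(x, i), and i is uniform on {1,…,n}. Then E_i[‖G − ∇f(y)‖²] ≤ 12 L² d ν² + 8L [f(z) − f(y) − ⟨∇f(y), z − y⟩] for all y, z ∈ ℝ^d. -/
open MeasureTheory Real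
open scoped RealInnerProductSpace

section Helpers
variable {E : Type*} [NormedAddCommGroup E] [InnerProductSpace ℝ E] [CompleteSpace E]

lemma line_hasDerivAt {f : E → ℝ} {f' : E → E}
    (hf : ∀ x, HasGradientAt f (f' x) x) (a v : E) (t : ℝ) :
    HasDerivAt (fun t : ℝ => f (a + t • v)) ⟪f' (a + t • v), v⟫ t := by
  have h1 : HasDerivAt (fun t : ℝ => a + t • v) v t := by
    simpa using ((hasDerivAt_id t).smul_const v).const_add a
  have h2 := (hasGradientAt_iff_hasFDerivAt.1 (hf (a + t • v)))
  exact h2.comp_hasDerivAt t h1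

lemma grad_ineq {f : E → ℝ} {f' : E → E}
    (hc : ConvexOn ℝ Set.univ f) (hf : ∀ x, HasGradientAt f (f' x) x) (y w : E) :
    f y + ⟪f' y, w - y⟫ ≤ f w := by
  set g : ℝ → ℝ := fun t => f (y + t • (w - y)) with hg
  have gconv : ConvexOn ℝ Set.univ g := by
    have h0 := hc.comp_affineMap (AffineMap.lineMap y w)
    have : (f ∘ ⇑(AffineMap.lineMap y w)) = g := by
      funext t
      simp [g, AffineMap.lineMap_apply, add_comm, vsub_eq_sub, vadd_eq_add]
    rw [this] at h0
    simpa using h0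
  have gd : HasDerivAt g ⟪f' y, w - y⟫ 0 := by
    simpa using line_hasDerivAt hf y (w - y) 0
  have h := gconv.deriv_le_slope (Set.mem_univ (0:ℝ)) (Set.mem_univ (1:ℝ))
      one_pos gd.differentiableAt
  rw [gd.deriv] at h
  have hslope : slope g 0 1 = f w - f y := by
    simp [slope, g]
  rw [hslope] at h
  linarith

lemma descent_lemma {f : E → ℝ} {f' : E → E}
    (hf : ∀ x, HasGradientAt f (f' x) x) {L : ℝ} (hL : 0 ≤ L)
    (hlip : ∀ x y, ‖f' x - f' y‖ ≤ L * ‖x - y‖) (a v : E) :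
    f (a + v) ≤ f a + ⟪f' a, v⟫ + L / 2 * ‖v‖ ^ 2 := by
  set φ : ℝ → ℝ := fun t => f (a + t • v) - t * ⟪f' a, v⟫ - L * t ^ 2 / 2 * ‖v‖ ^ 2 with hφ
  have hd : ∀ t : ℝ, HasDerivAt φ
      (⟪f' (a + t • v), v⟫ - ⟪f' a, v⟫ - L * t * ‖v‖ ^ 2) t := by
    intro t
    have h1 := line_hasDerivAt hf a v t
    have h2 : HasDerivAt (fun t : ℝ => t * ⟪f' a, v⟫) ⟪f' a, v⟫ t := by
      simpa using (hasDerivAt_id t).mul_const ⟪f' a, v⟫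
    have h3 : HasDerivAt (fun t : ℝ => L * t ^ 2 / 2 * ‖v‖ ^ 2) (L * t * ‖v‖ ^ 2) t := by
      have : HasDerivAt (fun t : ℝ => t ^ 2) (2 * t) t := by
        simpa using hasDerivAt_pow 2 t
      have := ((this.const_mul L).div_const 2).mul_const (‖v‖ ^ 2)
      rw [show L * t * ‖v‖ ^ 2 = L * (2 * t) / 2 * ‖v‖ ^ 2 by ring]
      exact this
    exact (h1.sub h2).sub h3
  have hanti : AntitoneOn φ (Set.Icc 0 1) := by
    apply antitoneOn_of_deriv_nonpos (convex_Icc 0 1)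
    · exact (Differentiable.continuous fun x => (hd x).differentiableAt).continuousOn
    · intro x hx
      exact (hd x).differentiableAt.differentiableWithinAt
    · intro x hx
      rw [(hd x).deriv]
      have hx' : x ∈ Set.Ioo (0:ℝ) 1 := by rwa [interior_Icc] at hx
      have hx0 : 0 ≤ x := hx'.1.le
      have hip : ⟪f' (a + x • v) - f' a, v⟫ ≤ L * x * ‖v‖ ^ 2 := by
        calc ⟪f' (a + x • v) - f' a, v⟫ ≤ ‖f' (a + x • v) - f' a‖ * ‖v‖ := real_inner_le_norm _ _
        _ ≤ (L * ‖(a + x • v) - a‖) * ‖v‖ := by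
            exact mul_le_mul_of_nonneg_right (hlip _ _) (norm_nonneg _)
        _ = L * x * ‖v‖ ^ 2 := by
            simp [norm_smul, abs_of_nonneg hx0]
            ring
      rw [inner_sub_left] at hip
      linarith
  have h01 := hanti (Set.left_mem_Icc.2 one_pos.le) (Set.right_mem_Icc.2 one_pos.le) one_pos.le
  simp only [φ, one_smul, zero_smul, add_zero, one_pow, zero_pow, mul_zero, zero_mul,
    sub_zero, mul_one, one_mul] at h01
  linarith

lemma cocoercivity {f : E → ℝ} {f' : E → E}
    (hc : ConvexOn ℝ Set.univ f) (hf : ∀ x, HasGradientAt f (f' x) x)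
    {L : ℝ} (hL : 0 ≤ L) (hlip : ∀ x y, ‖f' x - f' y‖ ≤ L * ‖x - y‖) (y z : E) :
    ‖f' y - f' z‖ ^ 2 ≤ 2 * L * (f z - f y - ⟪f' y, z - y⟫) := by
  rcases eq_or_lt_of_le hL with hL0 | hLpos
  · have h1 : ‖f' y - f' z‖ ≤ 0 := by simpa [← hL0] using hlip y z
    have h2 : ‖f' y - f' z‖ = 0 := le_antisymm h1 (norm_nonneg _)
    simp [h2, ← hL0]
  · set Δ := f' z - f' y with hΔ
    set w := z + (-(1 / L)) • Δ with hw
    have hdes := descent_lemma hf hL hlip z ((-(1 / L)) • Δ)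
    have hgi := grad_ineq hc hf y w
    have hnorm : ‖(-(1 / L)) • Δ‖ ^ 2 = (1 / L) ^ 2 * ‖Δ‖ ^ 2 := by
      rw [norm_smul]
      simp [abs_of_pos hLpos, mul_pow]
    have hiz : ⟪f' z, (-(1 / L)) • Δ⟫ = -(1 / L) * ⟪f' z, Δ⟫ := real_inner_smul_right _ _ _
    have hwy : ⟪f' y, w - y⟫ = ⟪f' y, z - y⟫ + (-(1 / L)) * ⟪f' y, Δ⟫ := by
      have : w - y = (z - y) + (-(1 / L)) • Δ := by rw [hw]; abel
      rw [this, inner_add_right, real_inner_smul_right]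
    have hΔsq : ⟪f' z, Δ⟫ - ⟪f' y, Δ⟫ = ‖Δ‖ ^ 2 := by
      rw [← inner_sub_left, ← hΔ, real_inner_self_eq_norm_sq]
    have hfw : f (z + (-(1 / L)) • Δ) = f w := by rw [hw]
    rw [hfw, hiz, hnorm] at hdes
    rw [hwy] at hgi
    have hnrev : ‖f' y - f' z‖ = ‖Δ‖ := by rw [hΔ, norm_sub_rev]
    rw [hnrev]
    have hL' : (0:ℝ) < 2 * L := by linarith
    have key : ‖Δ‖ ^ 2 / (2 * L) ≤ f z - f y - ⟪f' y, z - y⟫ := by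
      have expand : L / 2 * ((1 / L) ^ 2 * ‖Δ‖ ^ 2) = ‖Δ‖ ^ 2 / (2 * L) := by
        field_simp
      have hmul : (1 / L) * ⟪f' z, Δ⟫ - (1 / L) * ⟪f' y, Δ⟫ = (1 / L) * ‖Δ‖ ^ 2 := by
        rw [← mul_sub, hΔsq]
      have h2L : (1 / L) * ‖Δ‖ ^ 2 = 2 * (‖Δ‖ ^ 2 / (2 * L)) := by
        field_simp
      linarith [hdes, hgi, expand, hmul, h2L]
    calc ‖Δ‖ ^ 2 = 2 * L * (‖Δ‖ ^ 2 / (2 * L)) := by field_simp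
    _ ≤ 2 * L * (f z - f y - ⟪f' y, z - y⟫) := by
        exact mul_le_mul_of_nonneg_left key hL'.le

lemma bias_bound {d : ℕ} {f : EuclideanSpace ℝ (Fin d) → ℝ}
    {f' : EuclideanSpace ℝ (Fin d) → EuclideanSpace ℝ (Fin d)}
    (hc : ConvexOn ℝ Set.univ f) (hf : ∀ x, HasGradientAt f (f' x) x)
    {L : ℝ} (hL : 0 ≤ L)
    (hlip : ∀ x y, ‖f' x - f' y‖ ≤ L * ‖x - y‖) {ν : ℝ} (hν : 0 < ν)
    (x : EuclideanSpace ℝ (Fin d)) :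
    ‖(∑ j : Fin d, ((f (x + ν • EuclideanSpace.single j (1 : ℝ))
        - f (x - ν • EuclideanSpace.single j (1 : ℝ))) / (2 * ν)) •
        EuclideanSpace.single j (1 : ℝ)) - f' x‖ ^ 2 ≤ d * (L * ν / 2) ^ 2 := by
  set w : EuclideanSpace ℝ (Fin d) := (∑ j : Fin d, ((f (x + ν • EuclideanSpace.single j (1 : ℝ))
        - f (x - ν • EuclideanSpace.single j (1 : ℝ))) / (2 * ν)) •
        EuclideanSpace.single j (1 : ℝ)) - f' x with hwdef
  have hwj : ∀ j : Fin d, |w j| ≤ L * ν / 2 := by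
    intro j
    set e : EuclideanSpace ℝ (Fin d) := EuclideanSpace.single j (1 : ℝ) with he
    have hwjval : w j = (f (x + ν • e) - f (x - ν • e)) / (2 * ν) - f' x j := by
      rw [hwdef]
      rw [PiLp.sub_apply]
      congr 1
      rw [WithLp.ofLp_sum, Finset.sum_apply]
      simp [PiLp.smul_apply, EuclideanSpace.single_apply, he]
    have hne : ‖e‖ = 1 := by simp [he]
    have hip : ∀ c : ℝ, ⟪f' x, c • e⟫ = c * f' x j := by
      intro c
      rw [real_inner_smul_right]
      simp [he, EuclideanSpace.inner_single_right]
    have h1u : f (x + ν • e) ≤ f x + ν * f' x j + L / 2 * ν ^ 2 := by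
      have := descent_lemma hf hL hlip x (ν • e)
      rw [hip ν] at this
      simpa [norm_smul, hne, abs_of_pos hν] using this
    have h1l : f x + ν * f' x j ≤ f (x + ν • e) := by
      have := grad_ineq hc hf x (x + ν • e)
      rw [add_sub_cancel_left, hip ν] at this
      exact this
    have h2u : f (x - ν • e) ≤ f x - ν * f' x j + L / 2 * ν ^ 2 := by
      have := descent_lemma hf hL hlip x ((-ν) • e)
      rw [hip (-ν)] at this
      have heq : x + (-ν) • e = x - ν • e := by
        rw [neg_smul]; abel
      rw [heq] at this
      have : f (x - ν • e) ≤ f x + -ν * f' x j + L / 2 * ‖(-ν) • e‖ ^ 2 := this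
      simp [norm_smul, hne, abs_of_pos hν] at this
      linarith
    have h2l : f x - ν * f' x j ≤ f (x - ν • e) := by
      have := grad_ineq hc hf x (x - ν • e)
      have heq : (x - ν • e) - x = (-ν) • e := by
        rw [neg_smul]; abel
      rw [heq, hip (-ν)] at this
      linarith
    have h2ν : (0:ℝ) < 2 * ν := by linarith
    have hnum : |f (x + ν • e) - f (x - ν • e) - 2 * ν * f' x j| ≤ L / 2 * ν ^ 2 := by
      rw [abs_le]
      constructor <;> nlinarith [h1u, h1l, h2u, h2l]
    have heq2 : (f (x + ν • e) - f (x - ν • e)) / (2 * ν) - f' x j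
        = (f (x + ν • e) - f (x - ν • e) - 2 * ν * f' x j) / (2 * ν) := by
      field_simp
    rw [hwjval, heq2, abs_div, abs_of_pos h2ν, div_le_iff₀ h2ν]
    nlinarith [hnum, mul_nonneg hL (sq_nonneg ν)]
  have hnormsq : ‖w‖ ^ 2 = ∑ j : Fin d, (w j) ^ 2 := by
    rw [EuclideanSpace.norm_eq, Real.sq_sqrt (by positivity)]
    simp [sq_abs]
  rw [hnormsq]
  calc ∑ j : Fin d, (w j) ^ 2 ≤ ∑ j : Fin d, (L * ν / 2) ^ 2 := by
        apply Finset.sum_le_sum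
        intro j _
        have := hwj j
        nlinarith [abs_nonneg (w j), sq_abs (w j)]
  _ = d * (L * ν / 2) ^ 2 := by simp [Finset.sum_const, mul_comm]

lemma mean_sq_identity {n : ℕ} (hn : 0 < n) (v : Fin n → E) :
    ∑ i, ‖v i - (1/(n:ℝ)) • ∑ k, v k‖^2
      = ∑ i, ‖v i‖^2 - (n:ℝ) * ‖(1/(n:ℝ)) • ∑ k, v k‖^2 := by
  set m : E := (1/(n:ℝ)) • ∑ k, v k with hm
  have hnn : (0:ℝ) < (n:ℝ) := by exact_mod_cast hn
  have hsum_inner : ∑ i, ⟪v i, m⟫ = (n:ℝ) * ‖m‖^2 := by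
    rw [← sum_inner]
    have hsm : (∑ i, v i) = (n:ℝ) • m := by
      rw [hm, smul_smul, mul_one_div, div_self hnn.ne', one_smul]
    rw [hsm, real_inner_smul_left, real_inner_self_eq_norm_sq]
  calc ∑ i, ‖v i - m‖^2 = ∑ i, (‖v i‖^2 - 2*⟪v i, m⟫ + ‖m‖^2) := by
        refine Finset.sum_congr rfl fun i _ => ?_
        rw [norm_sub_sq_real]
  _ = ∑ i, ‖v i‖^2 - 2*((n:ℝ)*‖m‖^2) + (n:ℝ)*‖m‖^2 := by
        rw [Finset.sum_add_distrib, Finset.sum_sub_distrib, ← Finset.mul_sum, hsum_inner]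
        simp [Finset.sum_const, Finset.card_univ, nsmul_eq_mul]
  _ = ∑ i, ‖v i‖^2 - (n:ℝ) * ‖m‖^2 := by ring

lemma var_le {n : ℕ} (hn : 0 < n) (v : Fin n → E) :
    ∑ i, ‖v i - (1/(n:ℝ)) • ∑ k, v k‖^2 ≤ ∑ i, ‖v i‖^2 := by
  rw [mean_sq_identity hn v]
  have hnn : (0:ℝ) ≤ (n:ℝ) := by positivity
  nlinarith [sq_nonneg ‖(1/(n:ℝ)) • ∑ k, v k‖, norm_nonneg ((1/(n:ℝ)) • ∑ k, v k)]

lemma sq_mean_le {n : ℕ} (hn : 0 < n) (v : Fin n → E) :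
    ‖(1/(n:ℝ)) • ∑ k, v k‖^2 ≤ (1/(n:ℝ)) * ∑ k, ‖v k‖^2 := by
  have hnn : (0:ℝ) < (n:ℝ) := by exact_mod_cast hn
  have h0 : (0:ℝ) ≤ ∑ i, ‖v i - (1/(n:ℝ)) • ∑ k, v k‖^2 :=
    Finset.sum_nonneg fun i _ => sq_nonneg _
  rw [mean_sq_identity hn v] at h0
  have : (n:ℝ) * ‖(1/(n:ℝ)) • ∑ k, v k‖^2 ≤ ∑ k, ‖v k‖^2 := by linarith
  calc ‖(1/(n:ℝ)) • ∑ k, v k‖^2 = (1/(n:ℝ)) * ((n:ℝ) * ‖(1/(n:ℝ)) • ∑ k, v k‖^2) := by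
        field_simp
  _ ≤ (1/(n:ℝ)) * ∑ k, ‖v k‖^2 := by
        apply mul_le_mul_of_nonneg_left this
        positivity

lemma norm_add4_sq (a b c d : E) :
    ‖a + b + c + d‖^2 ≤ 4*(‖a‖^2 + ‖b‖^2 + ‖c‖^2 + ‖d‖^2) := by
  have h1 : ‖a + b + c + d‖ ≤ ‖a‖ + ‖b‖ + ‖c‖ + ‖d‖ := by
    calc ‖a + b + c + d‖ ≤ ‖a + b + c‖ + ‖d‖ := norm_add_le _ _
    _ ≤ (‖a + b‖ + ‖c‖) + ‖d‖ := add_le_add_left (norm_add_le _ _) _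
    _ ≤ ((‖a‖ + ‖b‖) + ‖c‖) + ‖d‖ := by
        exact add_le_add_left (add_le_add_left (norm_add_le _ _) _) _
  nlinarith [norm_nonneg (a + b + c + d), norm_nonneg a, norm_nonneg b, norm_nonneg c,
    norm_nonneg d, sq_nonneg (‖a‖ - ‖b‖), sq_nonneg (‖a‖ - ‖c‖), sq_nonneg (‖a‖ - ‖d‖),
    sq_nonneg (‖b‖ - ‖c‖), sq_nonneg (‖b‖ - ‖d‖), sq_nonneg (‖c‖ - ‖d‖)]

end Helpers

/-- Variance bound for the coordinate-wise variance-reduced DFO gradient estimator: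
for convex L-smooth `f_i` with average `f`, and
`G_i = g_ν(y,i) − g_ν(z,i) + g_ν(z)`, one has
`E_i ‖G_i − ∇f(y)‖² ≤ 12 L² d ν² + 8L [f(z) − f(y) − ⟨∇f(y), z − y⟩]`. -/
theorem coordinate_vr_estimator_variance
    (d n : ℕ) (hn : 0 < n)
    (f : Fin n → EuclideanSpace ℝ (Fin d) → ℝ)
    (f' : Fin n → EuclideanSpace ℝ (Fin d) → EuclideanSpace ℝ (Fin d))
    (hconv : ∀ i, ConvexOn ℝ Set.univ (f i))
    (hgrad : ∀ i x, HasGradientAt (f i) (f' i x) x)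
    (L : ℝ) (hL : 0 ≤ L)
    (hlip : ∀ i x y, ‖f' i x - f' i y‖ ≤ L * ‖x - y‖)
    (ν : ℝ) (hν : 0 < ν)
    (gν : EuclideanSpace ℝ (Fin d) → Fin n → EuclideanSpace ℝ (Fin d))
    (hgν : ∀ x i, gν x i = ∑ j : Fin d,
      ((f i (x + ν • EuclideanSpace.single j (1 : ℝ))
        - f i (x - ν • EuclideanSpace.single j (1 : ℝ))) / (2 * ν)) •
        EuclideanSpace.single j (1 : ℝ))
    (favg : EuclideanSpace ℝ (Fin d) → ℝ)
    (hfavg : ∀ x, favg x = (1 / (n : ℝ)) * ∑ i, f i x)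
    (gradavg : EuclideanSpace ℝ (Fin d) → EuclideanSpace ℝ (Fin d))
    (hgradavg : ∀ x, gradavg x = (1 / (n : ℝ)) • ∑ i, f' i x)
    (y z : EuclideanSpace ℝ (Fin d))
    (G : Fin n → EuclideanSpace ℝ (Fin d))
    (hG : ∀ i, G i = gν y i - gν z i + (1 / (n : ℝ)) • ∑ k, gν z k) :
    (1 / (n : ℝ)) * ∑ i, ‖G i - gradavg y‖ ^ 2 ≤
      12 * L ^ 2 * d * ν ^ 2 +
        8 * L * (favg z - favg y - ⟪gradavg y, z - y⟫) := by
  have hnn : (0:ℝ) < (n:ℝ) := by exact_mod_cast hn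
  set a : Fin n → EuclideanSpace ℝ (Fin d) := fun i => gν y i - f' i y with ha
  set b : Fin n → EuclideanSpace ℝ (Fin d) := fun i => gν z i - f' i z with hb
  set c : EuclideanSpace ℝ (Fin d) := (1 / (n:ℝ)) • ∑ k, (gν z k - f' k z) with hc
  set dd : Fin n → EuclideanSpace ℝ (Fin d) :=
    fun i => (f' i y - f' i z) - (1 / (n:ℝ)) • ∑ k, (f' k y - f' k z) with hdd
  -- decomposition
  have hdecomp : ∀ i, G i - gradavg y = a i + (-(b i)) + c + dd i := by
    intro i
    rw [hG i, hgradavg y, ha, hb, hc, hdd]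
    rw [Finset.sum_sub_distrib, Finset.sum_sub_distrib, smul_sub, smul_sub]
    module
  set B : ℝ := (d:ℝ) * (L * ν / 2) ^ 2 with hB
  -- individual bounds
  have habnd : ∀ i, ‖a i‖ ^ 2 ≤ B := by
    intro i
    rw [ha]
    simp only
    rw [hgν y i]
    exact bias_bound (hconv i) (hgrad i) hL (hlip i) hν y
  have hbbnd : ∀ i, ‖b i‖ ^ 2 ≤ B := by
    intro i
    rw [hb]
    simp only
    rw [hgν z i]
    exact bias_bound (hconv i) (hgrad i) hL (hlip i) hν z
  have hcbnd : ‖c‖ ^ 2 ≤ B := by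
    rw [hc]
    calc ‖(1 / (n:ℝ)) • ∑ k, (gν z k - f' k z)‖ ^ 2
        ≤ (1 / (n:ℝ)) * ∑ k, ‖gν z k - f' k z‖ ^ 2 := sq_mean_le hn _
    _ ≤ (1 / (n:ℝ)) * ∑ k : Fin n, B := by
        apply mul_le_mul_of_nonneg_left _ (by positivity)
        apply Finset.sum_le_sum
        intro k _
        rw [hgν z k]
        exact bias_bound (hconv k) (hgrad k) hL (hlip k) hν z
    _ = B := by
        rw [Finset.sum_const, Finset.card_univ, Fintype.card_fin, nsmul_eq_mul]
        field_simp
  -- averaged d-term bound via variance and cocoercivity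
  have hco : ∀ i, ‖f' i y - f' i z‖ ^ 2 ≤ 2 * L * (f i z - f i y - ⟪f' i y, z - y⟫) :=
    fun i => cocoercivity (hconv i) (hgrad i) hL (hlip i) y z
  have hsumd : ∑ i, ‖dd i‖ ^ 2 ≤ ∑ i, 2 * L * (f i z - f i y - ⟪f' i y, z - y⟫) := by
    calc ∑ i, ‖dd i‖ ^ 2 ≤ ∑ i, ‖f' i y - f' i z‖ ^ 2 :=
          var_le hn (fun i => f' i y - f' i z)
    _ ≤ ∑ i, 2 * L * (f i z - f i y - ⟪f' i y, z - y⟫) :=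
          Finset.sum_le_sum fun i _ => hco i
  -- the averaged RHS term equals 2L * S
  have hS : (1 / (n:ℝ)) * ∑ i, 2 * L * (f i z - f i y - ⟪f' i y, z - y⟫)
      = 2 * L * (favg z - favg y - ⟪gradavg y, z - y⟫) := by
    rw [hfavg z, hfavg y, hgradavg y, real_inner_smul_left]
    rw [← Finset.mul_sum]
    have : ∑ i, (f i z - f i y - ⟪f' i y, z - y⟫)
        = ∑ i, f i z - ∑ i, f i y - ⟪∑ i, f' i y, z - y⟫ := by
      rw [Finset.sum_sub_distrib, Finset.sum_sub_distrib, sum_inner]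
    rw [this]
    ring
  -- combine
  have hmain : ∀ i, ‖G i - gradavg y‖ ^ 2
      ≤ 4 * (‖a i‖ ^ 2 + ‖b i‖ ^ 2 + ‖c‖ ^ 2 + ‖dd i‖ ^ 2) := by
    intro i
    rw [hdecomp i]
    have := norm_add4_sq (a i) (-(b i)) c (dd i)
    simpa using this
  have hsum : (1 / (n:ℝ)) * ∑ i, ‖G i - gradavg y‖ ^ 2
      ≤ (1 / (n:ℝ)) * ∑ i, 4 * (‖a i‖ ^ 2 + ‖b i‖ ^ 2 + ‖c‖ ^ 2 + ‖dd i‖ ^ 2) := by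
    apply mul_le_mul_of_nonneg_left _ (by positivity)
    exact Finset.sum_le_sum fun i _ => hmain i
  have hexpand : (1 / (n:ℝ)) * ∑ i, 4 * (‖a i‖ ^ 2 + ‖b i‖ ^ 2 + ‖c‖ ^ 2 + ‖dd i‖ ^ 2)
      ≤ 12 * B + 4 * ((1 / (n:ℝ)) * ∑ i, ‖dd i‖ ^ 2) := by
    have h1 : ∑ i, 4 * (‖a i‖ ^ 2 + ‖b i‖ ^ 2 + ‖c‖ ^ 2 + ‖dd i‖ ^ 2)
        ≤ ∑ i, (12 * B + 4 * ‖dd i‖ ^ 2) := by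
      apply Finset.sum_le_sum
      intro i _
      have := habnd i
      have := hbbnd i
      linarith [hcbnd]
    have h2 : ∑ i, (12 * B + 4 * ‖dd i‖ ^ 2) = (n:ℝ) * (12 * B) + 4 * ∑ i, ‖dd i‖ ^ 2 := by
      rw [Finset.sum_add_distrib, Finset.sum_const, Finset.card_univ, Fintype.card_fin,
        nsmul_eq_mul, ← Finset.mul_sum]
    calc (1 / (n:ℝ)) * ∑ i, 4 * (‖a i‖ ^ 2 + ‖b i‖ ^ 2 + ‖c‖ ^ 2 + ‖dd i‖ ^ 2)
        ≤ (1 / (n:ℝ)) * ((n:ℝ) * (12 * B) + 4 * ∑ i, ‖dd i‖ ^ 2) := by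
          rw [← h2]
          exact mul_le_mul_of_nonneg_left h1 (by positivity)
    _ = 12 * B + 4 * ((1 / (n:ℝ)) * ∑ i, ‖dd i‖ ^ 2) := by
          field_simp
  have hdfinal : (1 / (n:ℝ)) * ∑ i, ‖dd i‖ ^ 2
      ≤ 2 * L * (favg z - favg y - ⟪gradavg y, z - y⟫) := by
    rw [← hS]
    exact mul_le_mul_of_nonneg_left hsumd (by positivity)
  have hBle : 12 * B ≤ 12 * L ^ 2 * d * ν ^ 2 := by
    rw [hB]
    have : (0:ℝ) ≤ (d:ℝ) := by positivity
    nlinarith [sq_nonneg (L * ν)]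
  linarith [hsum, hexpand, hdfinal, hBle]
end

section
/- If f : ℝ^d → ℝ is L-smooth, then ‖∇f_μ(x) − ∇f(x)‖ ≤ μ L (d + 3)^{3/2} / 2 for every x, where f_μ is the Gaussian smoothing of f. -/
open MeasureTheory Real

lemma one_dim_g_int : Integrable fun x : ℝ => Real.exp (-x ^ 2 / 2) := by
  have := integrable_exp_neg_mul_sq (b := 1/2) (by norm_num)
  convert this using 2 with x
  ring_nf

lemma one_dim_g : ∫ x : ℝ, Real.exp (-x ^ 2 / 2) = Real.sqrt (2 * π) := by
  have := integral_gaussian (1/2)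
  rw [show π / (1/2 : ℝ) = 2 * π by ring] at this
  rw [← this]
  congr 1 with x
  ring_nf

lemma one_dim_g2_int : Integrable fun x : ℝ => x ^ 2 * Real.exp (-x ^ 2 / 2) := by
  have := integrable_rpow_mul_exp_neg_mul_sq (b := 1/2) (by norm_num) (s := 2) (by norm_num)
  simp_rw [Real.rpow_two] at this
  convert this using 2 with x
  ring_nf

lemma one_dim_g2 : ∫ x : ℝ, x ^ 2 * Real.exp (-x ^ 2 / 2) = Real.sqrt (2 * π) := by
  calc ∫ x : ℝ, x ^ 2 * Real.exp (-x ^ 2 / 2)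
      = 2 * ∫ x in Set.Ioi (0:ℝ), x ^ 2 * Real.exp (-(1/2) * x ^ 2) := by
        rw [← integral_comp_abs (f := fun t : ℝ => t ^ 2 * Real.exp (-(1/2) * t ^ 2))]
        congr 1 with x
        simp only [sq_abs]; ring_nf
    _ = Real.sqrt (2 * π) := by
        have key := integral_rpow_mul_exp_neg_mul_rpow (p := 2) (q := 2) (b := 1/2)
          (by norm_num) (by norm_num) (by norm_num)
        have heq : ∫ x in Set.Ioi (0:ℝ), x ^ 2 * Real.exp (-(1/2) * x ^ 2)
            = ∫ x in Set.Ioi (0:ℝ), x ^ (2:ℝ) * Real.exp (-(1/2) * x ^ (2:ℝ)) := by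
          refine setIntegral_congr_fun measurableSet_Ioi (fun x hx => ?_)
          rw [← Real.rpow_natCast x 2]
          norm_num
        rw [heq, key]
        have hG : Real.Gamma ((2 + 1) / 2) = (1/2) * Real.sqrt π := by
          rw [show ((2:ℝ) + 1) / 2 = 1/2 + 1 by norm_num, Real.Gamma_add_one (by norm_num),
            Real.Gamma_one_half_eq]
        rw [hG]
        rw [show (-((2:ℝ)+1)/2) = -(3/2 : ℝ) by norm_num]
        rw [show ((1:ℝ)/2) = 2⁻¹ by norm_num, Real.inv_rpow (by norm_num),
          ← Real.rpow_neg (by norm_num), neg_neg]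
        rw [show ((3:ℝ)/2) = 1 + 1/2 by norm_num, Real.rpow_add (by norm_num), Real.rpow_one]
        rw [← Real.sqrt_eq_rpow, Real.sqrt_mul (by norm_num : (0:ℝ) ≤ 2)]
        ring

lemma gse_norm_sq_symm (d : ℕ) (y : Fin d → ℝ) :
    ‖(MeasurableEquiv.toLp 2 (Fin d → ℝ)) y‖ ^ 2 = ∑ i, y i ^ 2 := by
  rw [EuclideanSpace.norm_eq, Real.sq_sqrt (Finset.sum_nonneg fun i _ => by positivity)]
  simp [MeasurableEquiv.coe_toLp, Real.norm_eq_abs, sq_abs]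

lemma gse_prod_form (d : ℕ) (y : Fin d → ℝ) :
    Real.exp (-‖(MeasurableEquiv.toLp 2 (Fin d → ℝ)) y‖ ^ 2 / 2)
      = ∏ i, Real.exp (-(y i) ^ 2 / 2) := by
  simp only [gse_norm_sq_symm, ← Real.exp_sum]
  congr 1
  rw [← Finset.sum_div, ← Finset.sum_neg_distrib]

lemma gse_int_g (d : ℕ) :
    Integrable (fun u : EuclideanSpace ℝ (Fin d) => Real.exp (-‖u‖ ^ 2 / 2)) := by
  have mp := EuclideanSpace.volume_preserving_symm_measurableEquiv_toLp (Fin d)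
  rw [← MeasurePreserving.integrable_comp_emb mp.symm (MeasurableEquiv.measurableEmbedding _)]
  have : (fun u : EuclideanSpace ℝ (Fin d) => Real.exp (-‖u‖ ^ 2 / 2)) ∘
      (MeasurableEquiv.toLp 2 (Fin d → ℝ))
      = fun y : Fin d → ℝ => ∏ i, Real.exp (-(y i) ^ 2 / 2) := by
    ext y
    exact gse_prod_form d y
  rw [MeasurableEquiv.symm_symm, this]
  exact Integrable.fintype_prod fun i => one_dim_g_int

lemma gse_integral_g (d : ℕ) :
    ∫ u : EuclideanSpace ℝ (Fin d), Real.exp (-‖u‖ ^ 2 / 2) = Real.sqrt (2 * π) ^ d := by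
  have mp := (EuclideanSpace.volume_preserving_symm_measurableEquiv_toLp (Fin d)).symm
  rw [← mp.integral_comp (MeasurableEquiv.measurableEmbedding _)]
  calc ∫ y : Fin d → ℝ, Real.exp (-‖(MeasurableEquiv.toLp 2 (Fin d → ℝ)) y‖ ^ 2 / 2)
      = ∫ y : Fin d → ℝ, ∏ i, Real.exp (-(y i) ^ 2 / 2) := by
        congr 1 with y; exact gse_prod_form d y
    _ = (∫ x : ℝ, Real.exp (-x ^ 2 / 2)) ^ d := by
        rw [MeasureTheory.integral_fintype_prod_volume_eq_pow (ι := Fin d)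
          (fun x : ℝ => Real.exp (-x ^ 2 / 2))]
        simp
    _ = Real.sqrt (2 * π) ^ d := by rw [one_dim_g]

lemma gse_summand (d : ℕ) (i : Fin d) (y : Fin d → ℝ) :
    y i ^ 2 * ∏ j, Real.exp (-(y j) ^ 2 / 2)
      = ∏ j, (if j = i then y j ^ 2 else 1) * Real.exp (-(y j) ^ 2 / 2) := by
  rw [Finset.prod_mul_distrib]
  congr 1
  rw [Finset.prod_ite_eq' Finset.univ i (fun j => y j ^ 2)]
  simp

lemma gse_summand_int (d : ℕ) (i : Fin d) :
    Integrable (fun y : Fin d → ℝ =>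
      ∏ j, (if j = i then y j ^ 2 else 1) * Real.exp (-(y j) ^ 2 / 2)) := by
  have := Integrable.fintype_prod (E := ℝ) (μ := fun _ => volume)
    (f := fun j (x : ℝ) => (if j = i then x ^ 2 else 1) * Real.exp (-x ^ 2 / 2))
    (fun j => by by_cases h : j = i <;> simp [h, one_dim_g2_int, one_dim_g_int])
  exact this

lemma gse_int_g2 (d : ℕ) :
    Integrable (fun u : EuclideanSpace ℝ (Fin d) => ‖u‖ ^ 2 * Real.exp (-‖u‖ ^ 2 / 2)) := by
  have mp := EuclideanSpace.volume_preserving_symm_measurableEquiv_toLp (Fin d)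
  rw [← MeasurePreserving.integrable_comp_emb mp.symm (MeasurableEquiv.measurableEmbedding _)]
  have : (fun u : EuclideanSpace ℝ (Fin d) => ‖u‖ ^ 2 * Real.exp (-‖u‖ ^ 2 / 2)) ∘
      (MeasurableEquiv.toLp 2 (Fin d → ℝ))
      = fun y : Fin d → ℝ => ∑ i, ∏ j,
          (if j = i then y j ^ 2 else 1) * Real.exp (-(y j) ^ 2 / 2) := by
    ext y
    rw [Function.comp_apply, gse_prod_form, gse_norm_sq_symm, Finset.sum_mul]
    exact Finset.sum_congr rfl fun i _ => gse_summand d i y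
  rw [MeasurableEquiv.symm_symm, this]
  exact integrable_finset_sum _ fun i _ => gse_summand_int d i

lemma gse_integral_g2 (d : ℕ) :
    ∫ u : EuclideanSpace ℝ (Fin d), ‖u‖ ^ 2 * Real.exp (-‖u‖ ^ 2 / 2)
      = d * Real.sqrt (2 * π) ^ d := by
  have mp := (EuclideanSpace.volume_preserving_symm_measurableEquiv_toLp (Fin d)).symm
  rw [← mp.integral_comp (MeasurableEquiv.measurableEmbedding _)]
  calc ∫ y : Fin d → ℝ, ‖(MeasurableEquiv.toLp 2 (Fin d → ℝ)) y‖ ^ 2 *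
        Real.exp (-‖(MeasurableEquiv.toLp 2 (Fin d → ℝ)) y‖ ^ 2 / 2)
      = ∫ y : Fin d → ℝ, ∑ i, ∏ j,
          (if j = i then y j ^ 2 else 1) * Real.exp (-(y j) ^ 2 / 2) := by
        congr 1 with y
        rw [gse_prod_form, gse_norm_sq_symm, Finset.sum_mul]
        exact Finset.sum_congr rfl fun i _ => gse_summand d i y
    _ = ∑ i : Fin d, ∫ y : Fin d → ℝ, ∏ j,
          (if j = i then y j ^ 2 else 1) * Real.exp (-(y j) ^ 2 / 2) :=
        integral_finset_sum _ fun i _ => gse_summand_int d i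
    _ = ∑ i : Fin d, ∏ j : Fin d,
          ∫ x : ℝ, (if j = i then x ^ 2 else 1) * Real.exp (-x ^ 2 / 2) := by
        refine Finset.sum_congr rfl fun i _ => ?_
        exact MeasureTheory.integral_fintype_prod_volume_eq_prod (ι := Fin d)
          (fun j (x : ℝ) => (if j = i then x ^ 2 else 1) * Real.exp (-x ^ 2 / 2))
    _ = ∑ i : Fin d, ∏ j : Fin d, Real.sqrt (2 * π) := by
        refine Finset.sum_congr rfl fun i _ => Finset.prod_congr rfl fun j _ => ?_
        by_cases h : j = i
        · simp only [h, if_pos rfl]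
          exact one_dim_g2
        · simp only [if_neg h, one_mul]
          exact one_dim_g
    _ = d * Real.sqrt (2 * π) ^ d := by simp [Finset.prod_const, mul_comm]

lemma gse_c_mul (d : ℕ) : (2 * π) ^ (-(d : ℝ) / 2) * Real.sqrt (2 * π) ^ d = 1 := by
  have h2π : (0:ℝ) < 2 * π := by positivity
  rw [Real.sqrt_eq_rpow, ← Real.rpow_natCast ((2*π) ^ (1/2:ℝ)) d, ← Real.rpow_mul h2π.le,
    ← Real.rpow_add h2π, show -(d:ℝ)/2 + 1/2*(d:ℝ) = 0 by ring, Real.rpow_zero]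

/-- If `f : ℝ^d → ℝ` is L-smooth, then `‖∇f_μ(x) − ∇f(x)‖ ≤ μ L (d+3)^{3/2} / 2`
for every `x`, where `f_μ` is the Gaussian smoothing of `f`. -/
theorem gaussian_smoothing_gradient_error
    (d : ℕ) (f : EuclideanSpace ℝ (Fin d) → ℝ)
    (f' : EuclideanSpace ℝ (Fin d) → EuclideanSpace ℝ (Fin d))
    (hf : ∀ x, HasGradientAt f (f' x) x)
    (L : ℝ) (hL : 0 ≤ L)
    (hlip : ∀ x y, ‖f' x - f' y‖ ≤ L * ‖x - y‖)
    (μ : ℝ) (hμ : 0 < μ)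
    (hint : ∀ x : EuclideanSpace ℝ (Fin d),
      Integrable (fun u : EuclideanSpace ℝ (Fin d) =>
        Real.exp (-‖u‖ ^ 2 / 2) • f' (x + μ • u)))
    (fμ' : EuclideanSpace ℝ (Fin d) → EuclideanSpace ℝ (Fin d))
    (hfμ' : ∀ x, fμ' x = (2 * π) ^ (-(d : ℝ) / 2) •
      ∫ u : EuclideanSpace ℝ (Fin d), Real.exp (-‖u‖ ^ 2 / 2) • f' (x + μ • u)) :
    ∀ x, ‖fμ' x - f' x‖ ≤ μ * L * ((d : ℝ) + 3) ^ ((3 : ℝ) / 2) / 2 := by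
  intro x
  set c : ℝ := (2 * π) ^ (-(d : ℝ) / 2) with hc
  have hc_pos : 0 < c := by positivity
  have hint0 : Integrable (fun u : EuclideanSpace ℝ (Fin d) =>
      Real.exp (-‖u‖ ^ 2 / 2) • f' x) := (gse_int_g d).smul_const (f' x)
  -- key identity
  have key : fμ' x - f' x = c • ∫ u : EuclideanSpace ℝ (Fin d),
      Real.exp (-‖u‖ ^ 2 / 2) • (f' (x + μ • u) - f' x) := by
    have : ∫ u : EuclideanSpace ℝ (Fin d),
        Real.exp (-‖u‖ ^ 2 / 2) • (f' (x + μ • u) - f' x)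
        = (∫ u : EuclideanSpace ℝ (Fin d), Real.exp (-‖u‖ ^ 2 / 2) • f' (x + μ • u))
          - (Real.sqrt (2 * π) ^ d) • f' x := by
      simp_rw [smul_sub]
      rw [integral_sub (hint x) hint0, integral_smul_const, gse_integral_g d]
    rw [this, smul_sub, smul_smul, gse_c_mul d, one_smul, hfμ' x]
  rw [key]
  -- bound the integrand
  have hbd_int : Integrable (fun u : EuclideanSpace ℝ (Fin d) =>
      L * μ / 2 * (‖u‖ ^ 2 * Real.exp (-‖u‖ ^ 2 / 2) + Real.exp (-‖u‖ ^ 2 / 2))) :=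
    ((gse_int_g2 d).add (gse_int_g d)).const_mul _
  have hpt : ∀ u : EuclideanSpace ℝ (Fin d),
      ‖Real.exp (-‖u‖ ^ 2 / 2) • (f' (x + μ • u) - f' x)‖
        ≤ L * μ / 2 * (‖u‖ ^ 2 * Real.exp (-‖u‖ ^ 2 / 2) + Real.exp (-‖u‖ ^ 2 / 2)) := by
    intro u
    have hg : (0:ℝ) ≤ Real.exp (-‖u‖ ^ 2 / 2) := (Real.exp_pos _).le
    rw [norm_smul, Real.norm_of_nonneg hg]
    have h1 : ‖f' (x + μ • u) - f' x‖ ≤ L * (μ * ‖u‖) := by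
      have := hlip (x + μ • u) x
      rwa [add_sub_cancel_left, norm_smul, Real.norm_of_nonneg hμ.le] at this
    have h2 : μ * ‖u‖ ≤ μ * ((‖u‖ ^ 2 + 1) / 2) := by
      have : ‖u‖ ≤ (‖u‖ ^ 2 + 1) / 2 := by nlinarith [sq_nonneg (‖u‖ - 1)]
      exact mul_le_mul_of_nonneg_left this hμ.le
    calc Real.exp (-‖u‖ ^ 2 / 2) * ‖f' (x + μ • u) - f' x‖
        ≤ Real.exp (-‖u‖ ^ 2 / 2) * (L * (μ * ((‖u‖ ^ 2 + 1) / 2))) := by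
          refine mul_le_mul_of_nonneg_left (h1.trans ?_) hg
          exact mul_le_mul_of_nonneg_left h2 hL
      _ = L * μ / 2 * (‖u‖ ^ 2 * Real.exp (-‖u‖ ^ 2 / 2) + Real.exp (-‖u‖ ^ 2 / 2)) := by ring
  have hnorm : ‖∫ u : EuclideanSpace ℝ (Fin d),
      Real.exp (-‖u‖ ^ 2 / 2) • (f' (x + μ • u) - f' x)‖
      ≤ L * μ / 2 * ((d : ℝ) + 1) * Real.sqrt (2 * π) ^ d := by
    refine (norm_integral_le_integral_norm _).trans ?_
    have := integral_mono_of_nonneg (f := fun u : EuclideanSpace ℝ (Fin d) =>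
        ‖Real.exp (-‖u‖ ^ 2 / 2) • (f' (x + μ • u) - f' x)‖)
      (Filter.Eventually.of_forall fun u => norm_nonneg _) hbd_int
      (Filter.Eventually.of_forall hpt)
    refine this.trans ?_
    rw [integral_const_mul, integral_add (gse_int_g2 d) (gse_int_g d),
      gse_integral_g2 d, gse_integral_g d]
    ring_nf
    exact le_refl _
  calc ‖c • ∫ u : EuclideanSpace ℝ (Fin d),
        Real.exp (-‖u‖ ^ 2 / 2) • (f' (x + μ • u) - f' x)‖
      = c * ‖∫ u : EuclideanSpace ℝ (Fin d),
          Real.exp (-‖u‖ ^ 2 / 2) • (f' (x + μ • u) - f' x)‖ := by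
        rw [norm_smul, Real.norm_of_nonneg hc_pos.le]
    _ ≤ c * (L * μ / 2 * ((d : ℝ) + 1) * Real.sqrt (2 * π) ^ d) :=
        mul_le_mul_of_nonneg_left hnorm hc_pos.le
    _ = L * μ / 2 * ((d : ℝ) + 1) * (c * Real.sqrt (2 * π) ^ d) := by ring
    _ = L * μ / 2 * ((d : ℝ) + 1) := by rw [gse_c_mul d, mul_one]
    _ ≤ μ * L * ((d : ℝ) + 3) ^ ((3 : ℝ) / 2) / 2 := by
        have h1 : ((d : ℝ) + 1) ≤ ((d : ℝ) + 3) ^ ((3:ℝ)/2) := by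
          have h3 : (1:ℝ) ≤ (d : ℝ) + 3 := by
            have : (0:ℝ) ≤ (d:ℝ) := Nat.cast_nonneg d
            linarith
          calc ((d : ℝ) + 1) ≤ (d : ℝ) + 3 := by linarith
            _ = ((d : ℝ) + 3) ^ (1:ℝ) := (Real.rpow_one _).symm
            _ ≤ ((d : ℝ) + 3) ^ ((3:ℝ)/2) :=
              Real.rpow_le_rpow_of_exponent_le h3 (by norm_num)
        have hLμ : 0 ≤ L * μ := mul_nonneg hL hμ.le
        calc L * μ / 2 * ((d : ℝ) + 1) ≤ L * μ / 2 * (((d : ℝ) + 3) ^ ((3:ℝ)/2)) := by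
              exact mul_le_mul_of_nonneg_left h1 (by positivity)
          _ = μ * L * ((d : ℝ) + 3) ^ ((3 : ℝ) / 2) / 2 := by ring
end

section
/- Let f : ℝ^d → ℝ be L-smooth and let g_μ(x, u) = ((f(x + μu) − f(x))/μ) u with u ~ N(0, I_d). Then E_u[‖g_μ(x, u)‖²] ≤ (μ² L² (d + 6)³)/2 + 2(d + 4)‖∇f(x)‖². -/
open MeasureTheory Real Filter
open scoped InnerProductSpace



noncomputable def gm (n : ℕ) : ℝ := ∫ x : ℝ, x ^ n * Real.exp (-x ^ 2 / 2)

lemma gm_integrable (n : ℕ) : Integrable (fun x : ℝ => x ^ n * Real.exp (-x ^ 2 / 2)) := by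
  have h := integrable_rpow_mul_exp_neg_mul_sq (b := 1/2) (by norm_num) (s := n)
    (by exact lt_of_lt_of_le (by norm_num) (Nat.cast_nonneg n))
  simp only [Real.rpow_natCast] at h
  convert h using 2 with x
  ring_nf

lemma gm_zero : gm 0 = Real.sqrt (2 * π) := by
  have h := integral_gaussian (1/2)
  simp only [gm, pow_zero, one_mul]
  rw [show (π / (1/2)) = 2 * π by ring] at h
  rw [← h]
  congr 1 with x
  ring_nf

lemma tendsto_pow_exp_atTop (k : ℕ) :
    Tendsto (fun t : ℝ => t ^ k * Real.exp (-t ^ 2 / 2)) atTop (nhds 0) := by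
  have h := rpow_mul_exp_neg_mul_sq_isLittleO_exp_neg (b := 1/2) (by norm_num) (k : ℝ)
  simp only [Real.rpow_natCast] at h
  have hlin : Tendsto (fun x : ℝ => -(1/2 : ℝ) * x) atTop atBot :=
    (tendsto_id (α := ℝ)).const_mul_atTop_of_neg (by norm_num)
  have h2 : Tendsto (fun x : ℝ => Real.exp (-(1/2 : ℝ) * x)) atTop (nhds 0) :=
    Real.tendsto_exp_atBot.comp hlin
  have := h.trans_tendsto h2
  convert this using 2 with x
  ring_nf

lemma gm_tail (k : ℕ) :
    Tendsto (fun t : ℝ => t ^ k * Real.exp (-t ^ 2 / 2)) atBot (nhds 0) := by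
  rw [tendsto_zero_iff_norm_tendsto_zero]
  have h := (tendsto_pow_exp_atTop k).comp tendsto_abs_atBot_atTop
  rw [tendsto_zero_iff_norm_tendsto_zero] at h
  convert h using 2 with t
  simp [Function.comp, abs_mul, abs_pow, abs_of_pos (Real.exp_pos _), sq_abs]

lemma gm_succ_succ (k : ℕ) : gm (k + 2) = (k + 1) * gm k := by
  have hderiv : ∀ t : ℝ, HasDerivAt (fun t : ℝ => -(t ^ (k+1) * Real.exp (-t ^ 2 / 2)))
      (t ^ (k + 2) * Real.exp (-t ^ 2 / 2) - (k + 1) * (t ^ k * Real.exp (-t ^ 2 / 2))) t := by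
    intro t
    have h1 : HasDerivAt (fun t : ℝ => t ^ (k+1)) ((k+1) * t ^ k) t := by
      simpa using hasDerivAt_pow (k+1) t
    have h2 : HasDerivAt (fun t : ℝ => Real.exp (-t ^ 2 / 2)) (-t * Real.exp (-t ^ 2 / 2)) t := by
      have h3 : HasDerivAt (fun t : ℝ => -t ^ 2 / 2) (-t) t := by
        have := (hasDerivAt_pow 2 t).neg.div_const 2
        simpa using this.congr_deriv (by push_cast; ring)
      simpa [mul_comm] using h3.exp
    have := (h1.mul h2).neg
    refine this.congr_deriv ?_
    ring
  have hint : Integrable (fun t : ℝ =>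
      t ^ (k + 2) * Real.exp (-t ^ 2 / 2) - (k + 1) * (t ^ k * Real.exp (-t ^ 2 / 2))) :=
    (gm_integrable (k+2)).sub ((gm_integrable k).const_mul _)
  have hbot : Tendsto (fun t : ℝ => -(t ^ (k+1) * Real.exp (-t ^ 2 / 2))) atBot (nhds 0) := by
    simpa using (gm_tail (k+1)).neg
  have htop : Tendsto (fun t : ℝ => -(t ^ (k+1) * Real.exp (-t ^ 2 / 2))) atTop (nhds 0) := by
    simpa using (tendsto_pow_exp_atTop (k+1)).neg
  have h0 := MeasureTheory.integral_of_hasDerivAt_of_tendsto hderiv hint hbot htop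
  rw [sub_zero] at h0
  rw [integral_sub (gm_integrable (k+2)) ((gm_integrable k).const_mul _)] at h0
  rw [integral_const_mul _ _] at h0
  have : gm (k+2) - (k+1) * gm k = 0 := h0
  linarith

lemma gm_one : gm 1 = 0 := by
  have hderiv : ∀ t : ℝ, HasDerivAt (fun t : ℝ => -Real.exp (-t ^ 2 / 2))
      (t ^ 1 * Real.exp (-t ^ 2 / 2)) t := by
    intro t
    have h3 : HasDerivAt (fun t : ℝ => -t ^ 2 / 2) (-t) t := by
      have := (hasDerivAt_pow 2 t).neg.div_const 2
      simpa using this.congr_deriv (by push_cast; ring)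
    have := h3.exp.neg
    refine this.congr_deriv ?_
    ring
  have hbot : Tendsto (fun t : ℝ => -Real.exp (-t ^ 2 / 2)) atBot (nhds 0) := by
    have := (gm_tail 0).neg
    simpa using this
  have htop : Tendsto (fun t : ℝ => -Real.exp (-t ^ 2 / 2)) atTop (nhds 0) := by
    have := (tendsto_pow_exp_atTop 0).neg
    simpa using this
  have h0 := MeasureTheory.integral_of_hasDerivAt_of_tendsto hderiv (by simpa using gm_integrable 1) hbot htop
  simpa [gm] using h0

lemma gm_two : gm 2 = Real.sqrt (2 * π) := by
  have := gm_succ_succ 0; rw [gm_zero] at this; simpa using this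

lemma gm_three : gm 3 = 0 := by
  have := gm_succ_succ 1; rw [gm_one] at this; simpa using this

lemma gm_four : gm 4 = 3 * Real.sqrt (2 * π) := by
  have := gm_succ_succ 2; rw [gm_two] at this; rw [this]; norm_num

lemma gm_six : gm 6 = 15 * Real.sqrt (2 * π) := by
  have := gm_succ_succ 4; rw [gm_four] at this; rw [this]; norm_num; ring

variable {d : ℕ}

lemma mono_eq (a : Fin d → ℕ) (y : Fin d → ℝ) :
    (∏ l, (y l) ^ (a l)) * Real.exp (-(∑ l, (y l) ^ 2) / 2)
      = ∏ l, ((y l) ^ (a l) * Real.exp (-(y l) ^ 2 / 2)) := by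
  rw [Finset.prod_mul_distrib, ← Real.exp_sum]
  congr 1
  rw [← Finset.sum_neg_distrib, ← Finset.sum_div]

lemma integrable_monomial (a : Fin d → ℕ) :
    Integrable (fun y : Fin d → ℝ =>
      (∏ l, (y l) ^ (a l)) * Real.exp (-(∑ l, (y l) ^ 2) / 2)) := by
  simp_rw [mono_eq]
  exact Integrable.fintype_prod (𝕜 := ℝ) (fun i => gm_integrable (a i))

lemma integral_monomial (a : Fin d → ℕ) :
    ∫ y : Fin d → ℝ, (∏ l, (y l) ^ (a l)) * Real.exp (-(∑ l, (y l) ^ 2) / 2)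
      = ∏ l, gm (a l) := by
  simp_rw [mono_eq]
  exact MeasureTheory.integral_fintype_prod_volume_eq_prod
    (fun l t => t ^ (a l) * Real.exp (-t ^ 2 / 2))

lemma prod_pow_ite (y : Fin d → ℝ) (i : Fin d) (n : ℕ) :
    ∏ l, (y l) ^ (if l = i then n else 0) = (y i) ^ n := by
  simp [pow_ite, Finset.prod_ite_eq']

def a1 (i k j : Fin d) : Fin d → ℕ :=
  fun l => (if l = i then 1 else 0) + ((if l = k then 1 else 0) + (if l = j then 2 else 0))

def a2 (i j k : Fin d) : Fin d → ℕ :=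
  fun l => (if l = i then 2 else 0) + ((if l = j then 2 else 0) + (if l = k then 2 else 0))

lemma mono_a1 (i k j : Fin d) (y : Fin d → ℝ) :
    ∏ l, (y l) ^ (a1 i k j l) = y i * (y k * (y j) ^ 2) := by
  simp_rw [a1, pow_add, Finset.prod_mul_distrib, prod_pow_ite, pow_one]

lemma mono_a2 (i j k : Fin d) (y : Fin d → ℝ) :
    ∏ l, (y l) ^ (a2 i j k l) = (y i) ^ 2 * ((y j) ^ 2 * (y k) ^ 2) := by
  simp_rw [a2, pow_add, Finset.prod_mul_distrib, prod_pow_ite]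

lemma prod_pair (p q : Fin d) :
    ∏ l, (if l = p ∧ l = q then (3:ℝ) else 1) = if p = q then 3 else 1 := by
  rcases eq_or_ne p q with rfl | h
  · simp [Finset.prod_ite_eq']
  · rw [if_neg h]
    apply Finset.prod_eq_one
    intro l _
    rw [if_neg]
    rintro ⟨rfl, rfl⟩
    exact h rfl

lemma gm_a2_nonneg (i j k l : Fin d) : 0 ≤ gm (a2 i j k l) := by
  rcases eq_or_ne l i with rfl | h1 <;> rcases eq_or_ne l j with rfl | h2 <;>
    rcases eq_or_ne l k with rfl | h3 <;>
    simp_all [a2, gm_zero, gm_two, gm_four, gm_six] <;>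
    positivity

lemma gm_a2_le (i j k l : Fin d) :
    gm (a2 i j k l) ≤ ((if l = i ∧ l = j then (3:ℝ) else 1) *
      ((if l = j ∧ l = k then (3:ℝ) else 1) * (if l = i ∧ l = k then (3:ℝ) else 1))) *
      Real.sqrt (2 * π) := by
  have h0 : (0:ℝ) ≤ Real.sqrt (2 * π) := Real.sqrt_nonneg _
  rcases eq_or_ne l i with rfl | h1 <;> rcases eq_or_ne l j with rfl | h2 <;>
    rcases eq_or_ne l k with rfl | h3 <;>
    simp_all [a2, gm_zero, gm_two, gm_four, gm_six] <;>
    nlinarith [mul_nonneg (Real.sqrt_nonneg 2) (Real.sqrt_nonneg π)]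

lemma prod_gm_a2_le (i j k : Fin d) :
    ∏ l, gm (a2 i j k l) ≤
      ((if i = j then (3:ℝ) else 1) * ((if j = k then (3:ℝ) else 1) *
        (if i = k then (3:ℝ) else 1))) * (Real.sqrt (2 * π)) ^ d := by
  calc ∏ l, gm (a2 i j k l)
      ≤ ∏ l, (((if l = i ∧ l = j then (3:ℝ) else 1) *
          ((if l = j ∧ l = k then (3:ℝ) else 1) * (if l = i ∧ l = k then (3:ℝ) else 1))) *
          Real.sqrt (2 * π)) :=
        Finset.prod_le_prod (fun l _ => gm_a2_nonneg i j k l) (fun l _ => gm_a2_le i j k l)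
    _ = ((if i = j then (3:ℝ) else 1) * ((if j = k then (3:ℝ) else 1) *
        (if i = k then (3:ℝ) else 1))) * (Real.sqrt (2 * π)) ^ d := by
        rw [Finset.prod_mul_distrib, Finset.prod_const, Finset.card_univ, Fintype.card_fin,
          Finset.prod_mul_distrib, Finset.prod_mul_distrib, prod_pair, prod_pair, prod_pair]

lemma prod_gm_a1_ne (i k j : Fin d) (h : i ≠ k) : ∏ l, gm (a1 i k j l) = 0 := by
  apply Finset.prod_eq_zero (Finset.mem_univ i)
  rcases eq_or_ne i j with rfl | hij
  · simp [a1, h, gm_three]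
  · simp [a1, h, hij, gm_one]

lemma gm_a1_diag_nonneg (i j l : Fin d) : 0 ≤ gm (a1 i i j l) := by
  rcases eq_or_ne l i with rfl | h1 <;> rcases eq_or_ne l j with rfl | h2 <;>
    simp_all [a1, gm_zero, gm_two, gm_four] <;> positivity

lemma gm_a1_diag_le (i j l : Fin d) :
    gm (a1 i i j l) ≤ (if l = i ∧ l = j then (3:ℝ) else 1) * Real.sqrt (2 * π) := by
  rcases eq_or_ne l i with rfl | h1 <;> rcases eq_or_ne l j with rfl | h2 <;>
    simp_all [a1, gm_zero, gm_two, gm_four]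

lemma prod_gm_a1_diag_le (i j : Fin d) :
    ∏ l, gm (a1 i i j l) ≤ (if i = j then (3:ℝ) else 1) * (Real.sqrt (2 * π)) ^ d := by
  calc ∏ l, gm (a1 i i j l)
      ≤ ∏ l, ((if l = i ∧ l = j then (3:ℝ) else 1) * Real.sqrt (2 * π)) :=
        Finset.prod_le_prod (fun l _ => gm_a1_diag_nonneg i j l) (fun l _ => gm_a1_diag_le i j l)
    _ = (if i = j then (3:ℝ) else 1) * (Real.sqrt (2 * π)) ^ d := by
        rw [Finset.prod_mul_distrib, Finset.prod_const, Finset.card_univ, Fintype.card_fin,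
          prod_pair]

lemma prod_gm_a1_diag_nonneg (i j : Fin d) : 0 ≤ ∏ l, gm (a1 i i j l) :=
  Finset.prod_nonneg (fun l _ => gm_a1_diag_nonneg i j l)

lemma sum_ite_const (i : Fin d) (A B : ℝ) :
    ∑ k : Fin d, (if i = k then A else B) = B * d + (A - B) := by
  have h : ∀ k, (if i = k then A else B) = B + (if i = k then A - B else 0) := by
    intro k; split <;> ring
  simp_rw [h, Finset.sum_add_distrib, Finset.sum_const, Finset.sum_ite_eq, Finset.card_univ,
    Fintype.card_fin, Finset.mem_univ, if_pos, nsmul_eq_mul]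
  ring

lemma sum_W :
    (∑ i : Fin d, ∑ j : Fin d, ∑ k : Fin d, ((if i = j then (3:ℝ) else 1) *
        ((if j = k then (3:ℝ) else 1) * (if i = k then (3:ℝ) else 1))))
      = (d:ℝ)^3 + 6*(d:ℝ)^2 + 20*(d:ℝ) := by
  have hT : ∀ i j : Fin d, (∑ k : Fin d, ((if j = k then (3:ℝ) else 1) *
      (if i = k then (3:ℝ) else 1))) = (d:ℝ) + 4 + (if i = j then (4:ℝ) else 0) := by
    intro i j
    have h : ∀ k, ((if j = k then (3:ℝ) else 1) * (if i = k then (3:ℝ) else 1))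
        = 1 + ((if j = k then (2:ℝ) else 0) + ((if i = k then (2:ℝ) else 0)
          + (if j = k then (if i = k then (4:ℝ) else 0) else 0))) := by
      intro k; split_ifs <;> norm_num
    simp_rw [h, Finset.sum_add_distrib, Finset.sum_const, Finset.sum_ite_eq, Finset.card_univ,
      Fintype.card_fin, Finset.mem_univ, if_pos, nsmul_eq_mul]
    rcases eq_or_ne i j with rfl | hij
    · simp only [if_pos rfl]; ring
    · rw [if_neg hij]; ring
  simp_rw [← Finset.mul_sum, hT]
  have h2 : ∀ i : Fin d, (∑ j : Fin d, (if i = j then (3:ℝ) else 1) *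
      ((d:ℝ) + 4 + (if i = j then (4:ℝ) else 0)))
      = ((d:ℝ)+4) * d + (3*((d:ℝ)+8) - ((d:ℝ)+4)) := by
    intro i
    have h : ∀ j, ((if i = j then (3:ℝ) else 1) * ((d:ℝ) + 4 + (if i = j then (4:ℝ) else 0)))
        = (if i = j then 3*((d:ℝ)+8) else (d:ℝ)+4) := by
      intro j; split_ifs <;> ring
    simp_rw [h, sum_ite_const]
  simp_rw [h2, Finset.sum_const, Finset.card_univ, Fintype.card_fin, nsmul_eq_mul]
  ring

lemma cube_expand (s : Fin d → ℝ) :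
    (∑ j, s j) ^ 3 = ∑ i : Fin d, ∑ j : Fin d, ∑ k : Fin d, s i * (s j * s k) := by
  simp_rw [← Finset.mul_sum, ← Finset.sum_mul]
  ring

lemma I2_integrable :
    Integrable (fun y : Fin d → ℝ =>
      (∑ j, (y j) ^ 2) ^ 3 * Real.exp (-(∑ l, (y l) ^ 2) / 2)) := by
  have hexp : ∀ y : Fin d → ℝ, (∑ j, (y j) ^ 2) ^ 3 * Real.exp (-(∑ l, (y l) ^ 2) / 2)
      = ∑ p : Fin d × Fin d × Fin d,
        (∏ l, (y l) ^ (a2 p.1 p.2.1 p.2.2 l)) * Real.exp (-(∑ l, (y l) ^ 2) / 2) := by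
    intro y
    rw [← Finset.sum_mul]
    congr 1
    simp_rw [mono_a2, Fintype.sum_prod_type]
    exact cube_expand (fun j => (y j) ^ 2)
  simp_rw [hexp]
  exact integrable_finset_sum _ (fun p _ => integrable_monomial _)

lemma I2_bound :
    ∫ y : Fin d → ℝ, (∑ j, (y j) ^ 2) ^ 3 * Real.exp (-(∑ l, (y l) ^ 2) / 2)
      ≤ ((d:ℝ)^3 + 6*(d:ℝ)^2 + 20*(d:ℝ)) * Real.sqrt (2 * π) ^ d := by
  have hexp : ∀ y : Fin d → ℝ, (∑ j, (y j) ^ 2) ^ 3 * Real.exp (-(∑ l, (y l) ^ 2) / 2)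
      = ∑ p : Fin d × Fin d × Fin d,
        (∏ l, (y l) ^ (a2 p.1 p.2.1 p.2.2 l)) * Real.exp (-(∑ l, (y l) ^ 2) / 2) := by
    intro y
    rw [← Finset.sum_mul]
    congr 1
    simp_rw [mono_a2, Fintype.sum_prod_type]
    exact cube_expand (fun j => (y j) ^ 2)
  calc ∫ y : Fin d → ℝ, (∑ j, (y j) ^ 2) ^ 3 * Real.exp (-(∑ l, (y l) ^ 2) / 2)
      = ∑ p : Fin d × Fin d × Fin d, ∫ y : Fin d → ℝ,
          (∏ l, (y l) ^ (a2 p.1 p.2.1 p.2.2 l)) * Real.exp (-(∑ l, (y l) ^ 2) / 2) := by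
        simp_rw [hexp]
        exact integral_finset_sum _ (fun p _ => integrable_monomial _)
    _ = ∑ p : Fin d × Fin d × Fin d, ∏ l, gm (a2 p.1 p.2.1 p.2.2 l) := by
        simp_rw [integral_monomial]
    _ ≤ ∑ p : Fin d × Fin d × Fin d, ((if p.1 = p.2.1 then (3:ℝ) else 1) *
          ((if p.2.1 = p.2.2 then (3:ℝ) else 1) * (if p.1 = p.2.2 then (3:ℝ) else 1))) *
          Real.sqrt (2 * π) ^ d :=
        Finset.sum_le_sum (fun p _ => prod_gm_a2_le p.1 p.2.1 p.2.2)
    _ = ((d:ℝ)^3 + 6*(d:ℝ)^2 + 20*(d:ℝ)) * Real.sqrt (2 * π) ^ d := by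
        rw [← Finset.sum_mul]
        congr 1
        rw [Fintype.sum_prod_type]
        simp_rw [Fintype.sum_prod_type]
        exact sum_W

lemma sq_mul_expand (c y : Fin d → ℝ) :
    (∑ i, c i * y i) ^ 2 * (∑ j, (y j) ^ 2)
      = ∑ i : Fin d, ∑ k : Fin d, ∑ j : Fin d, (c i * c k) * (y i * (y k * (y j) ^ 2)) := by
  have h : ∀ i k j : Fin d, (c i * c k) * (y i * (y k * (y j) ^ 2))
      = (c i * y i) * ((c k * y k) * (y j) ^ 2) := by intros; ring
  simp_rw [h, ← Finset.mul_sum, ← Finset.sum_mul]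
  ring

lemma I1_expand (c : Fin d → ℝ) (y : Fin d → ℝ) :
    (∑ i, c i * y i) ^ 2 * (∑ j, (y j) ^ 2) * Real.exp (-(∑ l, (y l) ^ 2) / 2)
      = ∑ p : Fin d × Fin d × Fin d, (c p.1 * c p.2.1) *
          ((∏ l, (y l) ^ (a1 p.1 p.2.1 p.2.2 l)) * Real.exp (-(∑ l, (y l) ^ 2) / 2)) := by
  simp_rw [← mul_assoc, ← Finset.sum_mul]
  congr 1
  simp_rw [mono_a1, Fintype.sum_prod_type]
  exact sq_mul_expand c y

lemma I1_integrable (c : Fin d → ℝ) :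
    Integrable (fun y : Fin d → ℝ =>
      (∑ i, c i * y i) ^ 2 * (∑ j, (y j) ^ 2) * Real.exp (-(∑ l, (y l) ^ 2) / 2)) := by
  simp_rw [I1_expand]
  exact integrable_finset_sum _ (fun p _ => (integrable_monomial _).const_mul _)

lemma I1_bound (c : Fin d → ℝ) :
    ∫ y : Fin d → ℝ, (∑ i, c i * y i) ^ 2 * (∑ j, (y j) ^ 2) * Real.exp (-(∑ l, (y l) ^ 2) / 2)
      ≤ ((d:ℝ) + 2) * (∑ i, (c i) ^ 2) * Real.sqrt (2 * π) ^ d := by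
  calc ∫ y : Fin d → ℝ, (∑ i, c i * y i) ^ 2 * (∑ j, (y j) ^ 2) *
          Real.exp (-(∑ l, (y l) ^ 2) / 2)
      = ∑ p : Fin d × Fin d × Fin d, (c p.1 * c p.2.1) * ∏ l, gm (a1 p.1 p.2.1 p.2.2 l) := by
        simp_rw [I1_expand]
        rw [integral_finset_sum _ (fun p _ => (integrable_monomial _).const_mul _)]
        simp_rw [integral_const_mul, integral_monomial]
    _ ≤ ∑ p : Fin d × Fin d × Fin d, (if p.1 = p.2.1 then
          (c p.1) ^ 2 * ((if p.1 = p.2.2 then (3:ℝ) else 1) * Real.sqrt (2 * π) ^ d) else 0) := by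
        refine Finset.sum_le_sum (fun p _ => ?_)
        obtain ⟨i, k, j⟩ := p
        rcases eq_or_ne i k with rfl | hik
        · rw [if_pos rfl, show c i * c i = (c i)^2 by ring]
          exact mul_le_mul_of_nonneg_left (prod_gm_a1_diag_le i j) (sq_nonneg _)
        · simp only [if_neg hik]
          rw [prod_gm_a1_ne i k j hik, mul_zero]
    _ = ∑ i : Fin d, ∑ j : Fin d, (c i) ^ 2 *
          ((if i = j then (3:ℝ) else 1) * Real.sqrt (2 * π) ^ d) := by
        rw [Fintype.sum_prod_type]
        simp_rw [Fintype.sum_prod_type]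
        refine Finset.sum_congr rfl (fun i _ => ?_)
        rw [Finset.sum_comm]
        simp_rw [Finset.sum_ite_eq, Finset.mem_univ, if_pos]
    _ = ((d:ℝ) + 2) * (∑ i, (c i) ^ 2) * Real.sqrt (2 * π) ^ d := by
        simp_rw [← Finset.mul_sum, ← Finset.sum_mul, sum_ite_const]
        rw [← Finset.sum_mul]
        ring


lemma taylor_bound {E : Type*} [NormedAddCommGroup E] [InnerProductSpace ℝ E] [CompleteSpace E]
    {f : E → ℝ} {f' : E → E} (hf : ∀ x, HasGradientAt f (f' x) x)
    {L : ℝ} (hL : 0 ≤ L) (hlip : ∀ x y, ‖f' x - f' y‖ ≤ L * ‖x - y‖)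
    (x v : E) : abs (f (x + v) - f x - ⟪f' x, v⟫_ℝ) ≤ L / 2 * ‖v‖ ^ 2 := by
  have hf'cont : Continuous f' := by
    have : LipschitzWith (Real.toNNReal L) f' := by
      apply LipschitzWith.of_dist_le_mul
      intro a b
      rw [dist_eq_norm, dist_eq_norm, Real.coe_toNNReal L hL]
      exact hlip a b
    exact this.continuous
  have hg : ∀ t : ℝ, HasDerivAt (fun t : ℝ => f (x + t • v)) ⟪f' (x + t • v), v⟫_ℝ t := by
    intro t
    have h1 : HasDerivAt (fun t : ℝ => x + t • v) v t := by
      simpa using ((hasDerivAt_id t).smul_const v).const_add x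
    have h2 := (hf (x + t • v)).hasFDerivAt
    have := h2.comp_hasDerivAt t h1
    simpa [Function.comp_def] using this
  have hcont : Continuous fun t : ℝ => ⟪f' (x + t • v), v⟫_ℝ := by
    apply Continuous.inner
    · exact hf'cont.comp (by continuity)
    · exact continuous_const
  have hftc : f (x + v) - f x = ∫ t in (0:ℝ)..1, ⟪f' (x + t • v), v⟫_ℝ := by
    have := intervalIntegral.integral_eq_sub_of_hasDerivAt
      (f := fun t : ℝ => f (x + t • v)) (a := (0:ℝ)) (b := 1)
      (fun t _ => hg t) (hcont.intervalIntegrable 0 1)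
    simp only [one_smul, zero_smul, add_zero] at this
    linarith [this]
  have hconst : ⟪f' x, v⟫_ℝ = ∫ _t in (0:ℝ)..1, ⟪f' x, v⟫_ℝ := by
    simp
  rw [hftc, hconst, ← intervalIntegral.integral_sub (hcont.intervalIntegrable 0 1)
    (intervalIntegrable_const)]
  have hbound : ∀ t ∈ Set.uIoc (0:ℝ) 1, ‖⟪f' (x + t • v), v⟫_ℝ - ⟪f' x, v⟫_ℝ‖ ≤ L * ‖v‖^2 * t := by
    intro t ht
    rw [Set.uIoc_of_le (by norm_num : (0:ℝ) ≤ 1)] at ht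
    obtain ⟨ht0, ht1⟩ := ht
    rw [← inner_sub_left]
    calc ‖⟪f' (x + t • v) - f' x, v⟫_ℝ‖ ≤ ‖f' (x + t • v) - f' x‖ * ‖v‖ :=
          norm_inner_le_norm _ _
      _ ≤ (L * ‖t • v‖) * ‖v‖ := by
          apply mul_le_mul_of_nonneg_right _ (norm_nonneg v)
          simpa using hlip (x + t • v) x
      _ = L * ‖v‖^2 * t := by
          rw [norm_smul, Real.norm_eq_abs, abs_of_pos ht0]
          ring
  have h2 : ‖∫ t in (0:ℝ)..1, (⟪f' (x + t • v), v⟫_ℝ - ⟪f' x, v⟫_ℝ)‖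
      ≤ L * ‖v‖^2 * (1/2) := by
    have hgi : IntervalIntegrable (fun t : ℝ => L * ‖v‖^2 * t) volume 0 1 :=
      (continuous_const.mul continuous_id).intervalIntegrable 0 1
    have hval : (∫ t in (0:ℝ)..1, L * ‖v‖^2 * t) = L * ‖v‖^2 * (1/2) := by
      rw [intervalIntegral.integral_const_mul, integral_id]
      norm_num
    have hle := intervalIntegral.norm_integral_le_of_norm_le
      (f := fun t : ℝ => ⟪f' (x + t • v), v⟫_ℝ - ⟪f' x, v⟫_ℝ)
      (g := fun t : ℝ => L * ‖v‖^2 * t) (μ := volume) (a := 0) (b := 1) (by norm_num)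
      (Filter.Eventually.of_forall (fun t ht => hbound t (by rwa [Set.uIoc_of_le (by norm_num : (0:ℝ) ≤ 1)]))) hgi
    refine le_trans hle ?_
    rw [hval]
  rw [Real.norm_eq_abs] at h2
  calc abs (∫ t in (0:ℝ)..1, (⟪f' (x + t • v), v⟫_ℝ - ⟪f' x, v⟫_ℝ)) ≤ L * ‖v‖^2 * (1/2) := h2
    _ = L / 2 * ‖v‖ ^ 2 := by ring

set_option maxHeartbeats 2000000 in
/-- For L-smooth `f` and `g_μ(x,u) = ((f(x+μu) − f(x))/μ) u` with `u ~ N(0, I_d)`: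
`E_u ‖g_μ(x,u)‖² ≤ μ² L² (d+6)³ / 2 + 2(d+4) ‖∇f(x)‖²`. -/
theorem gaussian_estimator_second_moment
    (d : ℕ) (f : EuclideanSpace ℝ (Fin d) → ℝ)
    (f' : EuclideanSpace ℝ (Fin d) → EuclideanSpace ℝ (Fin d))
    (hf : ∀ x, HasGradientAt f (f' x) x)
    (L : ℝ) (hL : 0 ≤ L)
    (hlip : ∀ x y, ‖f' x - f' y‖ ≤ L * ‖x - y‖)
    (μ : ℝ) (hμ : 0 < μ)
    (x : EuclideanSpace ℝ (Fin d)) :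
    (2 * π) ^ (-(d : ℝ) / 2) *
        ∫ u : EuclideanSpace ℝ (Fin d),
          ‖((f (x + μ • u) - f x) / μ) • u‖ ^ 2 * Real.exp (-‖u‖ ^ 2 / 2) ≤
      μ ^ 2 * L ^ 2 * ((d : ℝ) + 6) ^ 3 / 2 + 2 * ((d : ℝ) + 4) * ‖f' x‖ ^ 2 := by
  classical
  set c : EuclideanSpace ℝ (Fin d) := f' x with hc
  set K : ℝ := L ^ 2 * μ ^ 2 / 2 with hK
  have hKnn : 0 ≤ K := by positivity
  set Φ : EuclideanSpace ℝ (Fin d) → ℝ := fun u => 2 * (⟪c, u⟫_ℝ ^ 2 * ‖u‖ ^ 2 * Real.exp (-‖u‖ ^ 2 / 2))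
      + K * ((‖u‖ ^ 2) ^ 3 * Real.exp (-‖u‖ ^ 2 / 2)) with hΦ
  -- pointwise bound
  have hpt : ∀ u : EuclideanSpace ℝ (Fin d), ‖((f (x + μ • u) - f x) / μ) • u‖ ^ 2 * Real.exp (-‖u‖ ^ 2 / 2) ≤ Φ u := by
    intro u
    have htay := taylor_bound hf hL hlip x (μ • u)
    rw [real_inner_smul_right] at htay
    have hnsm : ‖μ • u‖ ^ 2 = μ ^ 2 * ‖u‖ ^ 2 := by
      rw [norm_smul, mul_pow, Real.norm_eq_abs, sq_abs]
    rw [hnsm] at htay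
    have habs := abs_le.mp htay
    have hs : (((f (x + μ • u) - f x) / μ)) ^ 2 ≤ 2 * ⟪c, u⟫_ℝ ^ 2 + K * (‖u‖ ^ 2) ^ 2 := by
      have hμ' : μ ≠ 0 := ne_of_gt hμ
      have h1 : (f (x + μ • u) - f x) / μ - ⟪c, u⟫_ℝ
          = (f (x + μ • u) - f x - μ * ⟪c, u⟫_ℝ) / μ := by field_simp
      have h2 : |(f (x + μ • u) - f x) / μ - ⟪c, u⟫_ℝ| ≤ L / 2 * (μ * ‖u‖ ^ 2) := by
        rw [h1, abs_div, abs_of_pos hμ]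
        rw [div_le_iff₀ hμ]
        calc |f (x + μ • u) - f x - μ * ⟪c, u⟫_ℝ| ≤ L / 2 * (μ ^ 2 * ‖u‖ ^ 2) := htay
          _ = L / 2 * (μ * ‖u‖ ^ 2) * μ := by ring
      have h3 := abs_le.mp h2
      have hδ : ((f (x + μ • u) - f x) / μ - ⟪c, u⟫_ℝ) ^ 2 ≤ (L / 2 * (μ * ‖u‖ ^ 2)) ^ 2 :=
        sq_le_sq' h3.1 h3.2
      rw [hK]
      nlinarith [hδ, sq_nonneg ((f (x + μ • u) - f x) / μ - 2 * ⟪c, u⟫_ℝ)]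
    have hnsq : ‖((f (x + μ • u) - f x) / μ) • u‖ ^ 2
        = ((f (x + μ • u) - f x) / μ) ^ 2 * ‖u‖ ^ 2 := by
      rw [norm_smul, mul_pow, Real.norm_eq_abs, sq_abs]
    rw [hnsq, hΦ]
    have hexp : (0:ℝ) < Real.exp (-‖u‖ ^ 2 / 2) := Real.exp_pos _
    have hn2 : (0:ℝ) ≤ ‖u‖ ^ 2 := sq_nonneg _
    nlinarith [mul_le_mul_of_nonneg_right hs (mul_nonneg hn2 hexp.le)]
  -- transfer to Pi
  have me := EuclideanSpace.volume_preserving_symm_measurableEquiv_toLp (Fin d)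
  set e := (MeasurableEquiv.toLp 2 (Fin d → ℝ)).symm
  have hsymm : ∀ y : Fin d → ℝ, ∀ i, (e.symm y) i = y i := fun y i => rfl
  have hnorm : ∀ y : Fin d → ℝ, ‖(e.symm y : EuclideanSpace ℝ (Fin d))‖ ^ 2 = ∑ l, (y l) ^ 2 := by
    intro y
    rw [EuclideanSpace.norm_eq, sq_sqrt (Finset.sum_nonneg fun l _ => by positivity)]
    simp [hsymm, sq_abs]
  have hinner : ∀ y : Fin d → ℝ, ⟪c, (e.symm y : EuclideanSpace ℝ (Fin d))⟫_ℝ = ∑ i, c i * y i := by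
    intro y
    rw [PiLp.inner_apply]
    simp [hsymm, RCLike.inner_apply, conj_trivial]
    exact Finset.sum_congr rfl fun i _ => mul_comm _ _
  have hcomp : ∀ y : Fin d → ℝ, Φ (e.symm y)
      = 2 * ((∑ i, c i * y i) ^ 2 * (∑ j, (y j) ^ 2) * Real.exp (-(∑ l, (y l) ^ 2) / 2))
        + K * ((∑ j, (y j) ^ 2) ^ 3 * Real.exp (-(∑ l, (y l) ^ 2) / 2)) := by
    intro y
    simp only [hΦ]
    rw [hnorm, hinner]
  have hΦint : Integrable Φ := by
    rw [← (me.symm).integrable_comp_emb (e.symm.measurableEmbedding)]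
    have : (Φ ∘ e.symm) = fun y : Fin d → ℝ =>
        2 * ((∑ i, c i * y i) ^ 2 * (∑ j, (y j) ^ 2) * Real.exp (-(∑ l, (y l) ^ 2) / 2))
        + K * ((∑ j, (y j) ^ 2) ^ 3 * Real.exp (-(∑ l, (y l) ^ 2) / 2)) := funext hcomp
    rw [this]
    exact ((I1_integrable _).const_mul 2).add ((I2_integrable).const_mul K)
  have hΦval : ∫ u : EuclideanSpace ℝ (Fin d), Φ u ≤ 2 * (((d:ℝ) + 2) * (∑ i, (c i) ^ 2) * Real.sqrt (2 * π) ^ d)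
      + K * (((d:ℝ)^3 + 6*(d:ℝ)^2 + 20*(d:ℝ)) * Real.sqrt (2 * π) ^ d) := by
    rw [← (me.symm).integral_comp (e.symm.measurableEmbedding)]
    calc ∫ y : Fin d → ℝ, Φ (e.symm y)
        = ∫ y : Fin d → ℝ,
          (2 * ((∑ i, c i * y i) ^ 2 * (∑ j, (y j) ^ 2) * Real.exp (-(∑ l, (y l) ^ 2) / 2))
          + K * ((∑ j, (y j) ^ 2) ^ 3 * Real.exp (-(∑ l, (y l) ^ 2) / 2))) := by
          exact integral_congr_ae (Filter.Eventually.of_forall hcomp)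
      _ = 2 * (∫ y : Fin d → ℝ, (∑ i, c i * y i) ^ 2 * (∑ j, (y j) ^ 2) *
            Real.exp (-(∑ l, (y l) ^ 2) / 2))
          + K * (∫ y : Fin d → ℝ, (∑ j, (y j) ^ 2) ^ 3 * Real.exp (-(∑ l, (y l) ^ 2) / 2)) := by
          rw [integral_add ((I1_integrable _).const_mul 2) ((I2_integrable).const_mul K),
            integral_const_mul, integral_const_mul]
      _ ≤ _ := by
          gcongr
          · exact I1_bound _
          · exact I2_bound
  have hmono : ∫ u : EuclideanSpace ℝ (Fin d), ‖((f (x + μ • u) - f x) / μ) • u‖ ^ 2 * Real.exp (-‖u‖ ^ 2 / 2)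
      ≤ ∫ u : EuclideanSpace ℝ (Fin d), Φ u := by
    apply integral_mono_of_nonneg
    · exact Filter.Eventually.of_forall (fun u => by positivity)
    · exact hΦint
    · exact Filter.Eventually.of_forall hpt
  -- normalization constant
  have hc0 : Real.sqrt (2 * π) ^ d = (2 * π) ^ ((d:ℝ) / 2) := by
    rw [Real.sqrt_eq_rpow, ← Real.rpow_natCast ((2 * π) ^ ((1:ℝ)/2)) d,
      ← Real.rpow_mul (by positivity)]
    congr 1
    ring
  have h2π : (0:ℝ) < 2 * π := by positivity
  have hρ : (2 * π) ^ (-(d : ℝ) / 2) * Real.sqrt (2 * π) ^ d = 1 := by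
    rw [hc0, ← Real.rpow_add h2π]
    rw [show -(d:ℝ) / 2 + (d:ℝ) / 2 = 0 by ring, Real.rpow_zero]
  have hρnn : (0:ℝ) ≤ (2 * π) ^ (-(d : ℝ) / 2) := Real.rpow_nonneg h2π.le _
  have hcn : (∑ i, (c i) ^ 2) = ‖c‖ ^ 2 := by
    rw [EuclideanSpace.norm_eq, sq_sqrt (Finset.sum_nonneg fun l _ => by positivity)]
    simp [sq_abs]
  have hfinal : (2 * π) ^ (-(d : ℝ) / 2) *
      ∫ u : EuclideanSpace ℝ (Fin d), ‖((f (x + μ • u) - f x) / μ) • u‖ ^ 2 * Real.exp (-‖u‖ ^ 2 / 2)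
      ≤ 2 * (((d:ℝ) + 2) * ‖c‖ ^ 2) + K * ((d:ℝ)^3 + 6*(d:ℝ)^2 + 20*(d:ℝ)) := by
    calc (2 * π) ^ (-(d : ℝ) / 2) *
        ∫ u : EuclideanSpace ℝ (Fin d), ‖((f (x + μ • u) - f x) / μ) • u‖ ^ 2 * Real.exp (-‖u‖ ^ 2 / 2)
        ≤ (2 * π) ^ (-(d : ℝ) / 2) * ∫ u : EuclideanSpace ℝ (Fin d), Φ u := by
          exact mul_le_mul_of_nonneg_left hmono hρnn
      _ ≤ (2 * π) ^ (-(d : ℝ) / 2) * (2 * (((d:ℝ) + 2) * (∑ i, (c i) ^ 2) * Real.sqrt (2 * π) ^ d)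
          + K * (((d:ℝ)^3 + 6*(d:ℝ)^2 + 20*(d:ℝ)) * Real.sqrt (2 * π) ^ d)) :=
          mul_le_mul_of_nonneg_left hΦval hρnn
      _ = (2 * (((d:ℝ) + 2) * (∑ i, (c i) ^ 2)) + K * ((d:ℝ)^3 + 6*(d:ℝ)^2 + 20*(d:ℝ)))
          * ((2 * π) ^ (-(d : ℝ) / 2) * Real.sqrt (2 * π) ^ d) := by ring
      _ = 2 * (((d:ℝ) + 2) * ‖c‖ ^ 2) + K * ((d:ℝ)^3 + 6*(d:ℝ)^2 + 20*(d:ℝ)) := by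
          rw [hρ, hcn]; ring
  refine le_trans hfinal ?_
  have hdnn : (0:ℝ) ≤ (d:ℝ) := Nat.cast_nonneg d
  have hcnn : (0:ℝ) ≤ ‖c‖ ^ 2 := sq_nonneg _
  rw [hK]
  nlinarith [mul_nonneg (mul_nonneg (sq_nonneg L) (sq_nonneg μ)) hdnn,
    mul_nonneg (mul_nonneg (sq_nonneg L) (sq_nonneg μ)) (mul_nonneg hdnn hdnn),
    mul_nonneg (sq_nonneg L) (sq_nonneg μ), mul_nonneg hdnn hcnn]
end
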